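/- Let (X, 𝔉) be a measurable space, let π be a probability measure on X, let (ν_t)_{t≥0} be a family of probability measures on X, let F : X → [1, ∞) be measurable, and let ε ∈ (0,1), A > 0 and M ≥ 1 be constants such that ∫ F dν_t ≤ M·exp(√(2At)) for all t ≥ 0 and ∫ F^{1−ε} dπ = ∞. Then, with c_* = (2/ε − 1)·√(2A) and h_* = (1/2)·(2M)^{1−2/ε}, there exists a sequence (t_n)_{n≥0} increasing to infinity such that ‖ν_{t_n} − π‖_TV ≥ h_*·exp(−c_*·√(t_n)) for every n. -/

import Mathlib

open MeasureTheory Filter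
open scoped ENNReal NNReal

/-- Total variation distance between two measures:
`sup_B |μ(B) − ν(B)|` over measurable sets `B`. It satisfies
`tvDist μ ν ≥ ν(B) − μ(B)` for every measurable set `B`. -/
noncomputable def tvDist {X : Type*} [MeasurableSpace X] (μ ν : Measure X) : ℝ :=
  ⨆ B : {s : Set X // MeasurableSet s}, |(μ B.1).toReal - (ν B.1).toReal|

lemma tv_lower_aux {X : Type*} [MeasurableSpace X] (μ π : Measure X)
    [IsProbabilityMeasure μ] [IsProbabilityMeasure π] {B : Set X} (hB : MeasurableSet B) :
    (π B).toReal - (μ B).toReal ≤ tvDist μ π := by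
  have hbdd : BddAbove (Set.range fun B : {s : Set X // MeasurableSet s} =>
      |(μ B.1).toReal - (π B.1).toReal|) := by
    refine ⟨1, ?_⟩
    rintro x ⟨C, rfl⟩
    have h1 : (μ C.1).toReal ≤ 1 :=
      ENNReal.toReal_le_of_le_ofReal zero_le_one (by simpa using prob_le_one (μ := μ) (s := C.1))
    have h2 : (π C.1).toReal ≤ 1 :=
      ENNReal.toReal_le_of_le_ofReal zero_le_one (by simpa using prob_le_one (μ := π) (s := C.1))
    have h3 : 0 ≤ (μ C.1).toReal := ENNReal.toReal_nonneg
    have h4 : 0 ≤ (π C.1).toReal := ENNReal.toReal_nonneg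
    exact abs_le.mpr ⟨by linarith, by linarith⟩
  have hle := le_ciSup hbdd (⟨B, hB⟩ : {s : Set X // MeasurableSet s})
  calc (π B).toReal - (μ B).toReal ≤ |(π B).toReal - (μ B).toReal| := le_abs_self _
    _ = |(μ B).toReal - (π B).toReal| := abs_sub_comm _ _
    _ ≤ tvDist μ π := hle

lemma tail_lemma {X : Type*} [MeasurableSpace X] (π : Measure X) [IsProbabilityMeasure π]
    (F : X → ℝ) (hFmeas : Measurable F) (hF1 : ∀ x, 1 ≤ F x)
    {ε : ℝ} (hε : ε ∈ Set.Ioo (0 : ℝ) 1)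
    (hinf : ∫⁻ x, ENNReal.ofReal (F x ^ (1 - ε)) ∂π = ⊤) :
    ∀ R₀ : ℝ, ∃ R, R₀ ≤ R ∧ 1 ≤ R ∧
      ENNReal.ofReal (R ^ (ε / 2 - 1)) ≤ π {x | R ≤ F x} := by
  obtain ⟨hε0, hε1⟩ := hε
  have h1ε : (0 : ℝ) < 1 - ε := by linarith
  intro R₀
  by_contra hcon
  push_neg at hcon
  set S := max R₀ 1 with hSdef
  have hS1 : (1 : ℝ) ≤ S := le_max_right _ _
  have hS0 : (0 : ℝ) < S := lt_of_lt_of_le one_pos hS1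
  have htail : ∀ R, S ≤ R → π {x | R ≤ F x} ≤ ENNReal.ofReal (R ^ (ε / 2 - 1)) := by
    intro R hR
    exact (hcon R (le_trans (le_max_left _ _) hR) (le_trans hS1 hR)).le
  have hF0 : ∀ x, (0 : ℝ) ≤ F x := fun x => le_trans zero_le_one (hF1 x)
  have lc : ∫⁻ x, ENNReal.ofReal (F x ^ (1 - ε)) ∂π
      = ∫⁻ s in Set.Ioi (0 : ℝ), π {x | s ≤ F x ^ (1 - ε)} :=
    lintegral_eq_lintegral_meas_le π
      (ae_of_all _ fun x => Real.rpow_nonneg (hF0 x) _)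
      (hFmeas.pow measurable_const).aemeasurable
  set T := S ^ (1 - ε) with hTdef
  have hT1 : (1 : ℝ) ≤ T := Real.one_le_rpow hS1 h1ε.le
  set q := (ε / 2 - 1) / (1 - ε) with hqdef
  have hq : q < -1 := by
    rw [hqdef, div_lt_iff₀ h1ε]
    linarith
  have key : ∀ s ∈ Set.Ioi T, π {x | s ≤ F x ^ (1 - ε)} ≤ ENNReal.ofReal (s ^ q) := by
    intro s hs
    have hs1 : (1 : ℝ) < s := lt_of_le_of_lt hT1 hs
    have hs0 : (0 : ℝ) < s := lt_trans one_pos hs1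
    have hsub : {x | s ≤ F x ^ (1 - ε)} ⊆ {x | s ^ (1 / (1 - ε)) ≤ F x} := by
      intro x hx
      have h := Real.rpow_le_rpow hs0.le hx (by positivity : (0:ℝ) ≤ 1 / (1 - ε))
      rw [← Real.rpow_mul (hF0 x), mul_one_div, div_self h1ε.ne', Real.rpow_one] at h
      exact h
    have hSle : S ≤ s ^ (1 / (1 - ε)) := by
      calc S = (S ^ (1 - ε)) ^ (1 / (1 - ε)) := by
              rw [← Real.rpow_mul hS0.le, mul_one_div, div_self h1ε.ne', Real.rpow_one]
        _ ≤ s ^ (1 / (1 - ε)) :=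
            Real.rpow_le_rpow (Real.rpow_nonneg hS0.le _) hs.le (by positivity)
    calc π {x | s ≤ F x ^ (1 - ε)} ≤ π {x | s ^ (1 / (1 - ε)) ≤ F x} := measure_mono hsub
      _ ≤ ENNReal.ofReal ((s ^ (1 / (1 - ε))) ^ (ε / 2 - 1)) := htail _ hSle
      _ = ENNReal.ofReal (s ^ q) := by
          rw [← Real.rpow_mul hs0.le, hqdef, one_div, inv_mul_eq_div]
  have split : ∫⁻ s in Set.Ioi (0 : ℝ), π {x | s ≤ F x ^ (1 - ε)}
      ≤ (∫⁻ s in Set.Ioc (0:ℝ) T, (1 : ℝ≥0∞)) + ∫⁻ s in Set.Ioi T, ENNReal.ofReal (s ^ q) := by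
    have hun : Set.Ioi (0 : ℝ) = Set.Ioc 0 T ∪ Set.Ioi T :=
      (Set.Ioc_union_Ioi_eq_Ioi (by linarith)).symm
    rw [hun]
    refine le_trans (lintegral_union_le _ _ _) (add_le_add ?_ ?_)
    · exact setLIntegral_mono measurable_const fun s _ => prob_le_one
    · exact setLIntegral_mono (ENNReal.measurable_ofReal.comp
        (measurable_id.pow measurable_const)) key
  have fin1 : (∫⁻ s in Set.Ioc (0:ℝ) T, (1 : ℝ≥0∞)) < ⊤ := by
    rw [setLIntegral_const]
    simp [Real.volume_Ioc]
  have fin2 : ∫⁻ s in Set.Ioi T, ENNReal.ofReal (s ^ q) < ⊤ :=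
    (integrableOn_Ioi_rpow_of_lt hq (by linarith : (0:ℝ) < T)).lintegral_lt_top
  rw [lc] at hinf
  have := lt_of_le_of_lt split (ENNReal.add_lt_top.mpr ⟨fin1, fin2⟩)
  exact absurd hinf (by exact ne_top_of_lt this)

theorem stmt_0 {X : Type*} [MeasurableSpace X]
    (π : Measure X) [IsProbabilityMeasure π]
    (ν : ℝ → Measure X) (hν : ∀ t : ℝ, 0 ≤ t → IsProbabilityMeasure (ν t))
    (F : X → ℝ) (hFmeas : Measurable F) (hF1 : ∀ x, 1 ≤ F x)
    (ε A M : ℝ) (hε : ε ∈ Set.Ioo (0 : ℝ) 1) (hA : 0 < A) (hM : 1 ≤ M)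
    (hbound : ∀ t : ℝ, 0 ≤ t →
      ∫⁻ x, ENNReal.ofReal (F x) ∂(ν t)
        ≤ ENNReal.ofReal (M * Real.exp (Real.sqrt (2 * A * t))))
    (hinf : ∫⁻ x, ENNReal.ofReal (F x ^ (1 - ε)) ∂π = ⊤) :
    ∃ t : ℕ → ℝ, StrictMono t ∧ Tendsto t atTop atTop ∧
      ∀ n, 0 ≤ t n ∧
        (1 / 2) * (2 * M) ^ (1 - 2 / ε)
            * Real.exp (-((2 / ε - 1) * Real.sqrt (2 * A)) * Real.sqrt (t n))
          ≤ tvDist (ν (t n)) π := by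
  obtain ⟨hε0, hε1⟩ := hε
  have hM0 : (0 : ℝ) < 2 * M := by linarith
  have hA2 : (0 : ℝ) < 2 * A := by linarith
  have tail := tail_lemma π F hFmeas hF1 ⟨hε0, hε1⟩ hinf
  have key : ∀ T : ℝ, ∃ t, T < t ∧ 0 ≤ t ∧
      (1 / 2) * (2 * M) ^ (1 - 2 / ε)
          * Real.exp (-((2 / ε - 1) * Real.sqrt (2 * A)) * Real.sqrt t)
        ≤ tvDist (ν t) π := by
    intro T
    set s0 := Real.sqrt (2 * A * max T 0) with hs0def
    have hs0nn : 0 ≤ s0 := Real.sqrt_nonneg _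
    obtain ⟨R, hRR₁, hR1, hπB⟩ :=
      tail (Real.exp ((2 / ε) * (Real.log (2 * M) + s0 + 1)))
    have hR0 : (0 : ℝ) < R := lt_of_lt_of_le one_pos hR1
    set L := ε / 2 * Real.log R - Real.log (2 * M) with hLdef
    have hlogR : (2 / ε) * (Real.log (2 * M) + s0 + 1) ≤ Real.log R := by
      calc (2 / ε) * (Real.log (2 * M) + s0 + 1)
          = Real.log (Real.exp ((2 / ε) * (Real.log (2 * M) + s0 + 1))) :=
            (Real.log_exp _).symm
        _ ≤ Real.log R := Real.log_le_log (Real.exp_pos _) hRR₁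
    have hL : s0 + 1 ≤ L := by
      have h2 : ε / 2 * ((2 / ε) * (Real.log (2 * M) + s0 + 1)) ≤ ε / 2 * Real.log R :=
        mul_le_mul_of_nonneg_left hlogR (by positivity)
      have h3 : ε / 2 * ((2 / ε) * (Real.log (2 * M) + s0 + 1))
          = Real.log (2 * M) + s0 + 1 := by field_simp
      rw [h3] at h2
      rw [hLdef]; linarith
    have hLpos : (0 : ℝ) < L := by linarith
    set t := L ^ 2 / (2 * A) with htdef
    have ht0 : (0 : ℝ) ≤ t := by positivity
    have hsqrt2At : Real.sqrt (2 * A * t) = L := by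
      rw [htdef, show 2 * A * (L ^ 2 / (2 * A)) = L ^ 2 by field_simp]
      exact Real.sqrt_sq hLpos.le
    have hsqrtt : Real.sqrt (2 * A) * Real.sqrt t = L := by
      rw [← Real.sqrt_mul hA2.le]; exact hsqrt2At
    have hTt : T < t := by
      have h1 : s0 ^ 2 = 2 * A * max T 0 := Real.sq_sqrt (by positivity)
      have h2 : s0 ^ 2 < L ^ 2 := by nlinarith
      have h3 : max T 0 < t := by
        rw [htdef, lt_div_iff₀ hA2]
        nlinarith
      exact lt_of_le_of_lt (le_max_left _ _) h3
    haveI := hν t ht0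
    set B := {x | R ≤ F x} with hBdef
    have hB : MeasurableSet B := measurableSet_le measurable_const hFmeas
    have hmark : ν t B ≤ ENNReal.ofReal (R ^ (ε / 2 - 1) / 2) := by
      have hBeq : B = {x | ENNReal.ofReal R ≤ ENNReal.ofReal (F x)} := by
        ext x
        simp [hBdef, ENNReal.ofReal_le_ofReal_iff (le_trans zero_le_one (hF1 x))]
      have h1 : ENNReal.ofReal R * ν t B
          ≤ ENNReal.ofReal (M * Real.exp (Real.sqrt (2 * A * t))) := by
        refine le_trans ?_ (hbound t ht0)
        rw [hBeq]
        exact mul_meas_ge_le_lintegral₀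
          (ENNReal.measurable_ofReal.comp hFmeas).aemeasurable _
      have h2 : M * Real.exp (Real.sqrt (2 * A * t)) = R * (R ^ (ε / 2 - 1) / 2) := by
        rw [hsqrt2At, hLdef, Real.exp_sub, Real.exp_log hM0]
        rw [show R ^ (ε / 2 - 1) = Real.exp (Real.log R * (ε / 2 - 1)) from
          Real.rpow_def_of_pos hR0 _]
        rw [show R * (Real.exp (Real.log R * (ε / 2 - 1)) / 2)
            = Real.exp (Real.log R) * Real.exp (Real.log R * (ε / 2 - 1)) / 2 by
          rw [Real.exp_log hR0]; ring]
        rw [← Real.exp_add, show Real.log R + Real.log R * (ε / 2 - 1)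
            = ε / 2 * Real.log R by ring]
        field_simp
      rw [h2, ENNReal.ofReal_mul hR0.le] at h1
      exact (ENNReal.mul_le_mul_iff_right (by simp [hR0] : ENNReal.ofReal R ≠ 0)
        ENNReal.ofReal_ne_top).mp h1
    have hπ' : R ^ (ε / 2 - 1) ≤ (π B).toReal := by
      have h := ENNReal.toReal_mono (measure_ne_top π B) hπB
      rwa [ENNReal.toReal_ofReal (Real.rpow_nonneg hR0.le _)] at h
    have hν' : (ν t B).toReal ≤ R ^ (ε / 2 - 1) / 2 :=
      ENNReal.toReal_le_of_le_ofReal (by positivity) hmark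
    have htv := tv_lower_aux (ν t) π hB
    refine ⟨t, hTt, ht0, ?_⟩
    have hid : (1 / 2) * (2 * M) ^ (1 - 2 / ε)
        * Real.exp (-((2 / ε - 1) * Real.sqrt (2 * A)) * Real.sqrt t)
        = R ^ (ε / 2 - 1) / 2 := by
      rw [show -((2 / ε - 1) * Real.sqrt (2 * A)) * Real.sqrt t
          = -((2 / ε - 1) * (Real.sqrt (2 * A) * Real.sqrt t)) by ring, hsqrtt]
      rw [Real.rpow_def_of_pos hM0, Real.rpow_def_of_pos hR0, hLdef]
      rw [show (1:ℝ)/2 * Real.exp (Real.log (2*M) * (1 - 2/ε))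
          * Real.exp (-((2/ε - 1) * (ε/2 * Real.log R - Real.log (2*M))))
          = Real.exp (Real.log (2*M) * (1 - 2/ε)
              + -((2/ε - 1) * (ε/2 * Real.log R - Real.log (2*M)))) / 2 by
        rw [Real.exp_add]; ring]
      congr 2
      field_simp
      ring
    rw [hid]
    linarith
  choose g hg1 hg2 hg3 using key
  set t : ℕ → ℝ := fun n => Nat.rec (g 0) (fun n tn => g (max tn (n + 1))) n with htdef
  have htsucc : ∀ n : ℕ, t (n + 1) = g (max (t n) (n + 1)) := fun n => rfl
  have hmono : StrictMono t := by
    apply strictMono_nat_of_lt_succ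
    intro n
    rw [htsucc]
    exact lt_of_le_of_lt (le_max_left _ _) (hg1 _)
  have hge : ∀ n : ℕ, (n : ℝ) ≤ t n := by
    intro n
    cases n with
    | zero => simpa using (show (0:ℝ) ≤ t 0 from (hg1 0).le)
    | succ n =>
      rw [htsucc]
      push_cast
      calc ((n : ℝ) + 1) ≤ max (t n) ((n : ℝ) + 1) := le_max_right _ _
        _ ≤ g (max (t n) ((n : ℝ) + 1)) := (hg1 _).le
  refine ⟨t, hmono, tendsto_atTop_mono hge tendsto_natCast_atTop_atTop, ?_⟩
  intro n
  cases n with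
  | zero => exact ⟨hg2 0, hg3 0⟩
  | succ n => rw [htsucc]; exact ⟨hg2 _, hg3 _⟩
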